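/- If a hyperreal field R* is an ordered field extension of ℝ containing an infinite element N in its hypernatural part, then the collection μ = {X ⊆ ℕ : N ∈ X*} is a nonprincipal ultrafilter on ℕ, where X* denotes the transfer of X. In particular, the existence of such a structure with the transfer principle implies the existence of a nonprincipal ultrafilter on ℕ. -/

import Mathlib

open FirstOrder Language Cardinal

universe u v w

/-- The language of the structure (ℝ; +, ·, <, (A)_{A ⊆ ℕ}): binary functions for
addition and multiplication, a binary order relation, and a unary predicate for
every subset of ℕ. -/
def natSetLang : FirstOrder.Language :=
  ⟨fun n => match n with | 2 => Fin 2 | _ => Empty,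
   fun n => match n with | 1 => Set ℕ | 2 => Unit | _ => Empty⟩

instance : natSetLang.Structure ℝ where
  funMap {n} f x :=
    match n, f with
    | 2, f => if (show Fin 2 from f).val = 0 then x 0 + x 1 else x 0 * x 1
    | 0, f => f.elim
    | 1, f => f.elim
    | _+3, f => f.elim
  RelMap {n} r x :=
    match n, r with
    | 1, A => ∃ k ∈ (show Set ℕ from A), (k : ℝ) = x 0
    | 2, _ => x 0 < x 1
    | 0, r => r.elim
    | _+3, r => r.elim

@[simp] theorem real_relMap₁ (A : Set ℕ) (x : Fin 1 → ℝ) :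
    Structure.RelMap (show natSetLang.Relations 1 from A) x ↔ ∃ k ∈ A, (k : ℝ) = x 0 :=
  Iff.rfl

@[simp] theorem real_relMap₂ (x : Fin 2 → ℝ) :
    Structure.RelMap (show natSetLang.Relations 2 from ()) x ↔ x 0 < x 1 :=
  Iff.rfl

/-- The atomic formula `X(&0)` as a bounded formula over free-variable type `α`. -/
def setForm {α : Type} (X : Set ℕ) : natSetLang.BoundedFormula α 1 :=
  Relations.boundedFormula₁ (show natSetLang.Relations 1 from X) (Term.var (Sum.inr 0))

theorem setForm_realize {α : Type} {M : Type} [natSetLang.Structure M] (X : Set ℕ) (v : α → M)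
    (a : M) : (setForm X).Realize v (Fin.snoc (default : Fin 0 → M) a) ↔
      Structure.RelMap (show natSetLang.Relations 1 from X) ![a] :=
  BoundedFormula.realize_rel₁

/-- The atomic formula `x₀ < &0` with one free variable. -/
def ltForm : natSetLang.BoundedFormula (Fin 1) 1 :=
  Relations.boundedFormula₂ (show natSetLang.Relations 2 from ())
    (Term.var (Sum.inl 0)) (Term.var (Sum.inr 0))

theorem ltForm_realize {M : Type} [natSetLang.Structure M] (v : Fin 1 → M)
    (a : M) : ltForm.Realize v (Fin.snoc (default : Fin 0 → M) a) ↔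
      Structure.RelMap (show natSetLang.Relations 2 from ()) ![v 0, a] :=
  BoundedFormula.realize_rel₂

/-- If R* is an elementary extension of (ℝ; +, ·, <, (A)_{A⊆ℕ}) and N is an element of
ℕ* greater than every standard natural number, then μ = {X ⊆ ℕ : N ∈ X*} is a
nonprincipal ultrafilter on ℕ. -/
theorem ultrafilter_from_hyperreal (R : Type) [natSetLang.Structure R]
    (f : ℝ ↪ₑ[natSetLang] R) (N : R)
    (hN : Structure.RelMap (show natSetLang.Relations 1 from (Set.univ : Set ℕ)) ![N])
    (hbig : ∀ n : ℕ, Structure.RelMap (show natSetLang.Relations 2 from ()) ![f (n : ℝ), N]) :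
    ∃ u : Ultrafilter ℕ,
      (∀ X : Set ℕ, X ∈ (u : Filter ℕ) ↔
        Structure.RelMap (show natSetLang.Relations 1 from X) ![N]) ∧
      ∀ n : ℕ, ({n} : Set ℕ) ∉ (u : Filter ℕ) := by
  set P : Set ℕ → Prop :=
    fun X => Structure.RelMap (show natSetLang.Relations 1 from X) ![N] with hP
  -- monotonicity
  have hmono : ∀ X Y : Set ℕ, X ⊆ Y → P X → P Y := by
    intro X Y h hX
    have key := (f.map_sentence ((((setForm X : natSetLang.BoundedFormula Empty 1)).imp
      (setForm Y)).all)).mp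
    simp only [Sentence.Realize, Formula.Realize, BoundedFormula.realize_all,
      BoundedFormula.realize_imp, setForm_realize, BoundedFormula.realize_rel₁,
      Term.realize_var, Sum.elim_inr, real_relMap₁] at key
    exact key (fun a ⟨k, hk, e⟩ => ⟨k, h hk, e⟩) N hX
  -- intersections
  have hinter : ∀ X Y : Set ℕ, P X → P Y → P (X ∩ Y) := by
    intro X Y hX hY
    have key := (f.map_sentence ((((setForm X : natSetLang.BoundedFormula Empty 1)).imp
      ((setForm Y).imp (setForm (X ∩ Y)))).all)).mp
    simp only [Sentence.Realize, Formula.Realize, BoundedFormula.realize_all,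
      BoundedFormula.realize_imp, setForm_realize, BoundedFormula.realize_rel₁,
      Term.realize_var, Sum.elim_inr, real_relMap₁] at key
    refine key ?_ N hX hY
    rintro a ⟨k, hk, e⟩ ⟨k', hk', e'⟩
    have : (k : ℝ) = (k' : ℝ) := e.trans e'.symm
    have hkk : k = k' := Nat.cast_injective this
    exact ⟨k, ⟨hk, hkk ▸ hk'⟩, e⟩
  -- the empty set is not in μ
  have hempty : ¬ P ∅ := by
    intro h0
    have key := (f.map_sentence ((((setForm ∅ : natSetLang.BoundedFormula Empty 1)).not).all)).mp
    simp only [Sentence.Realize, Formula.Realize, BoundedFormula.realize_all,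
      BoundedFormula.realize_not, setForm_realize, BoundedFormula.realize_rel₁,
      Term.realize_var, Sum.elim_inr, real_relMap₁] at key
    exact key (fun a ⟨k, hk, _⟩ => hk) N h0
  -- completeness: X or its complement
  have hcompl : ∀ X : Set ℕ, P X ∨ P Xᶜ := by
    intro X
    have key := (f.map_sentence ((((setForm Set.univ : natSetLang.BoundedFormula Empty 1)).imp
      ((setForm X) ⊔ (setForm Xᶜ))).all)).mp
    simp only [Sentence.Realize, Formula.Realize, BoundedFormula.realize_all,
      BoundedFormula.realize_imp, BoundedFormula.realize_sup, setForm_realize,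
      BoundedFormula.realize_rel₁, Term.realize_var, Sum.elim_inr, real_relMap₁] at key
    refine key ?_ N hN
    rintro a ⟨k, -, e⟩
    by_cases hk : k ∈ X
    · exact Or.inl ⟨k, hk, e⟩
    · exact Or.inr ⟨k, hk, e⟩
  -- singletons are not in μ
  have hsing : ∀ n : ℕ, ¬ P {n} := by
    intro n hn
    have key := (f.map_formula ((((setForm {n} : natSetLang.BoundedFormula (Fin 1) 1)).imp
      ltForm.not).all) ![(n : ℝ)]).mpr
    simp only [Formula.Realize, BoundedFormula.realize_all, BoundedFormula.realize_imp,
      BoundedFormula.realize_not, setForm_realize, ltForm_realize, BoundedFormula.realize_rel₁,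
      BoundedFormula.realize_rel₂, Term.realize_var, Sum.elim_inr, Sum.elim_inl,
      real_relMap₁, real_relMap₂, Function.comp] at key
    have hR : ∀ a : ℝ, (∃ k ∈ ({n} : Set ℕ), (k : ℝ) = a) → ¬ ((n : ℝ) < a) := by
      rintro a ⟨k, hk, e⟩
      rcases hk with rfl
      rw [← e]
      exact lt_irrefl _
    exact key hR N hn (hbig n)
  -- assemble the filter
  let F : Filter ℕ :=
    { sets := {X | P X}
      univ_sets := hN
      sets_of_superset := fun hX h => hmono _ _ h hX
      inter_sets := fun hX hY => hinter _ _ hX hY }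
  have hmemF : ∀ X : Set ℕ, X ∈ F ↔ P X := fun X => Iff.rfl
  refine ⟨Ultrafilter.ofComplNotMemIff F ?_, fun X => Iff.rfl, fun n hn => hsing n hn⟩
  intro s
  constructor
  · intro h
    exact (hcompl s).resolve_right h
  · intro hs hsc
    exact hempty (hmono _ _ (by simp) (hinter _ _ hs hsc))
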